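/- Gronwall-type metastability bound: let h : [0,∞) → [0,∞) be differentiable and g : [0,∞) → [0,∞) satisfy h'(t) ≤ −(1/C)h(t) + (1/C)g(t) for all t ≥ 0, with C > 0. Define δ(t) := sup_{s ≤ t} g(s) − g(t). Then h(t) − g(t) ≤ e^{−t/C} h(0) + δ(t) for all t ≥ 0. -/

import Mathlib

open Set

/-- Gronwall-type metastability bound: if `h, g : [0, ∞) → [0, ∞)` with `h`
differentiable satisfying `h'(t) ≤ −(1/C) h(t) + (1/C) g(t)` for `t ≥ 0` and `C > 0`, and
`δ(t) := sup_{s ≤ t} g(s) − g(t)`, then `h(t) − g(t) ≤ e^{−t/C} h(0) + δ(t)` for all `t ≥ 0`. -/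
theorem gronwall_metastability
    (C : ℝ) (hC : 0 < C)
    (h g h' : ℝ → ℝ)
    (hh_nonneg : ∀ t, 0 ≤ t → 0 ≤ h t)
    (hg_nonneg : ∀ t, 0 ≤ t → 0 ≤ g t)
    (hg_bdd : ∀ t, 0 ≤ t → BddAbove (g '' Icc 0 t))
    (hderiv : ∀ t, 0 ≤ t → HasDerivAt h (h' t) t)
    (hineq : ∀ t, 0 ≤ t → h' t ≤ -(1 / C) * h t + (1 / C) * g t)
    (t : ℝ) (ht : 0 ≤ t) :
    h t - g t ≤ Real.exp (-t / C) * h 0 + ((⨆ s ∈ Icc 0 t, g s) - g t) := by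
  set M : ℝ := ⨆ s ∈ Icc (0:ℝ) t, g s with hM
  have h0mem : (0:ℝ) ∈ Icc 0 t := ⟨le_rfl, ht⟩
  have hrange : BddAbove (Set.range fun i : Icc (0:ℝ) t => g i) := by
    rw [← Set.image_eq_range]; exact hg_bdd t ht
  have h0le : g 0 ≤ ⨆ i : Icc (0:ℝ) t, g i := le_ciSup_set (hg_bdd t ht) h0mem
  have hMeq : M = sSup (g '' Icc 0 t) :=
    (csSup_image hrange (by
      rw [Real.sSup_empty]; exact le_trans (hg_nonneg 0 le_rfl) h0le)).symm
  have hle : ∀ s ∈ Icc (0:ℝ) t, g s ≤ M := fun s hs => by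
    rw [hMeq]; exact le_csSup (hg_bdd t ht) (mem_image_of_mem g hs)
  have hM0 : 0 ≤ M := le_trans (hg_nonneg 0 le_rfl) (hle 0 ⟨le_rfl, ht⟩)
  -- auxiliary function
  set F : ℝ → ℝ := fun s => Real.exp (s / C) * (h s - M) with hF
  have hFd : ∀ s, 0 ≤ s → HasDerivAt F
      (Real.exp (s / C) * (1 / C) * (h s - M) + Real.exp (s / C) * h' s) s := by
    intro s hs
    have he : HasDerivAt (fun s : ℝ => Real.exp (s / C)) (Real.exp (s / C) * (1 / C)) s := by
      have := ((hasDerivAt_id s).div_const C).exp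
      simpa [mul_comm, one_div] using this
    have hh : HasDerivAt (fun s => h s - M) (h' s) s := (hderiv s hs).sub_const M
    exact he.mul hh
  have hcont : ContinuousOn F (Icc 0 t) := fun s hs =>
    ((hFd s hs.1).continuousAt).continuousWithinAt
  have hanti : AntitoneOn F (Icc 0 t) := by
    apply antitoneOn_of_deriv_nonpos (convex_Icc 0 t) hcont
    · intro s hs
      rw [interior_Icc] at hs
      exact ((hFd s hs.1.le).differentiableAt).differentiableWithinAt
    · intro s hs
      rw [interior_Icc] at hs
      rw [(hFd s hs.1.le).deriv]
      have h1 : h' s ≤ -(1 / C) * h s + (1 / C) * M := by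
        refine (hineq s hs.1.le).trans ?_
        have := hle s ⟨hs.1.le, hs.2.le⟩
        nlinarith [one_div_pos.mpr hC]
      have he : 0 < Real.exp (s / C) := Real.exp_pos _
      nlinarith
  have key : F t ≤ F 0 := hanti ⟨le_rfl, ht⟩ ⟨ht, le_rfl⟩ ht
  have hF0 : F 0 = h 0 - M := by simp [hF]
  have het : 0 < Real.exp (t / C) := Real.exp_pos _
  have h1 : Real.exp (t / C) * (h t - M) ≤ h 0 := by
    calc Real.exp (t / C) * (h t - M) = F t := rfl
      _ ≤ h 0 - M := by rw [← hF0]; exact key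
      _ ≤ h 0 := by linarith
  have h2 : h t - M ≤ Real.exp (-t / C) * h 0 := by
    rw [neg_div, Real.exp_neg]
    calc h t - M ≤ h 0 / Real.exp (t / C) := (le_div_iff₀' het).mpr h1
      _ = (Real.exp (t / C))⁻¹ * h 0 := by ring
  linarith
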